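/- For any integer k ≥ 0, any ω ∈ ℝ^d, and any x with ‖x‖ ≤ T, letting ω̄ = ω/‖ω‖, one has e^{iω·x} = ∑_{j=0}^k (iω·x)^j/j! + (i^{k+1}/k!)‖ω‖^{k+1} ∫_0^T [(ω̄·x - t)_+^k e^{i‖ω‖t} + (-1)^{k-1}(-ω̄·x - t)_+^k e^{-i‖ω‖t}] dt. -/

import Mathlib

open MeasureTheory RealInnerProductSpace

/-- The truncated power function `z ↦ (z)_+^k` (Heaviside convention for `k = 0`). -/
noncomputable def tpow (k : ℕ) (z : ℝ) : ℝ := if 0 < z then z ^ k else 0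

open Complex intervalIntegral in
lemma exp_taylor_I (k : ℕ) (z : ℝ) :
    Complex.exp (Complex.I * z)
      = (∑ j ∈ Finset.range (k + 1), (Complex.I * z) ^ j / (j.factorial : ℂ))
        + Complex.I ^ (k + 1) / (k.factorial : ℂ)
            * ∫ t in (0:ℝ)..z, ((z : ℂ) - t) ^ k * Complex.exp (Complex.I * t) := by
  induction k with
  | zero =>
    simp only [pow_zero, one_mul, pow_one, Nat.factorial_zero, Nat.cast_one, div_one,
      Finset.sum_range_one]
    rw [integral_exp_mul_complex Complex.I_ne_zero]
    field_simp
    simp only [zero_add, Finset.sum_range_one, pow_zero, Nat.factorial_zero, Nat.cast_one, div_one,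
      Complex.ofReal_zero, mul_zero, Complex.exp_zero]
    ring
  | succ k ih =>
    have hu : ∀ t ∈ Set.uIcc (0:ℝ) z,
        HasDerivAt (fun t : ℝ => ((z:ℂ) - t) ^ (k+1))
          ((((k:ℂ)+1) * ((z:ℂ) - t) ^ k) * (-1)) t := by
      intro t _
      have h1 := ((hasDerivAt_id (t:ℂ)).const_sub (z:ℂ)).pow (k+1)
      have h2 := h1.comp_ofReal
      simp only [id_eq, Nat.add_sub_cancel, Nat.cast_add, Nat.cast_one] at h2
      exact h2
    have hv : ∀ t ∈ Set.uIcc (0:ℝ) z,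
        HasDerivAt (fun t : ℝ => Complex.exp (Complex.I * t) * (-Complex.I))
          (Complex.exp (Complex.I * t)) t := by
      intro t _
      have h1 := (((hasDerivAt_id (t:ℂ)).const_mul Complex.I).cexp).mul_const (-Complex.I)
      have h2 := h1.comp_ofReal
      simpa [mul_assoc, mul_neg, Complex.I_mul_I] using h2
    have hu' : IntervalIntegrable (fun t : ℝ => (((k:ℂ)+1) * ((z:ℂ) - t) ^ k) * (-1))
        volume 0 z := by
      apply Continuous.intervalIntegrable
      fun_prop
    have hv' : IntervalIntegrable (fun t : ℝ => Complex.exp (Complex.I * t)) volume 0 z := by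
      apply Continuous.intervalIntegrable
      fun_prop
    have hibp := integral_mul_deriv_eq_deriv_mul hu hv hu' hv'
    simp only [Complex.ofReal_zero, sub_self, zero_pow (Nat.succ_ne_zero k), zero_mul,
      mul_zero, Complex.exp_zero, one_mul, sub_zero] at hibp
    have hconst : ∀ t : ℝ, ((((k:ℂ)+1) * ((z:ℂ) - t) ^ k) * (-1))
        * (Complex.exp (Complex.I * t) * (-Complex.I))
        = (((k:ℂ)+1) * Complex.I) * (((z:ℂ) - t) ^ k * Complex.exp (Complex.I * t)) :=
      fun t => by ring
    simp only [hconst] at hibp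
    rw [intervalIntegral.integral_const_mul] at hibp
    rw [Finset.sum_range_succ, ih, hibp]
    have hfac : (((k+1).factorial : ℕ) : ℂ) = ((k:ℂ)+1) * (k.factorial : ℂ) := by
      push_cast [Nat.factorial_succ]; ring
    rw [hfac, pow_succ (Complex.I) (k+1), mul_pow]
    set R := ∫ t in (0:ℝ)..z, ((z:ℂ) - t) ^ k * Complex.exp (Complex.I * t) with hR
    set A := Complex.I ^ (k+1) with hA
    set Z := (z:ℂ) ^ (k+1) with hZ
    have hf : (k.factorial : ℂ) ≠ 0 := Nat.cast_ne_zero.mpr k.factorial_ne_zero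
    have hm : ((k:ℂ)+1) ≠ 0 := by
      have := Nat.cast_add_one_ne_zero (R := ℂ) k
      exact_mod_cast this
    field_simp
    ring_nf
    linear_combination Complex.I * ((k:ℂ) * Complex.I ^ k * R + Complex.I ^ k * R
      - Complex.I ^ k * (z:ℂ) * (z:ℂ) ^ k) * Complex.I_sq

lemma tpow_eq_zero (k : ℕ) {z : ℝ} (h : z ≤ 0) : tpow k z = 0 := if_neg (not_lt.mpr h)

lemma tpow_eq_pow (k : ℕ) {z : ℝ} (h : 0 < z) : tpow k z = z ^ k := if_pos h

lemma tpow_monotone (k : ℕ) : Monotone (tpow k) := by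
  intro a b hab
  unfold tpow
  split_ifs with h1 h2 h2
  · exact pow_le_pow_left₀ h1.le hab k
  · exact absurd (h1.trans_le hab) h2
  · exact pow_nonneg h2.le k
  · exact le_refl 0

lemma tpow_measurable (k : ℕ) : Measurable (tpow k) := by
  unfold tpow
  exact Measurable.ite (measurableSet_lt measurable_const measurable_id)
    (measurable_id.pow_const k) measurable_const

lemma tpow_intervalIntegrable (k : ℕ) (s a b : ℝ) (c : ℂ) :
    IntervalIntegrable (fun t : ℝ => ((tpow k (s - t) : ℝ) : ℂ) * Complex.exp (c * t))
      volume a b := by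
  have hanti : Antitone (fun t : ℝ => s - t) := fun u v huv => by simp; linarith
  have h1 : IntervalIntegrable (fun t : ℝ => tpow k (s - t)) volume a b :=
    ((tpow_monotone k).comp_antitone hanti).intervalIntegrable
  have h2 : IntervalIntegrable (fun t : ℝ => ((tpow k (s - t) : ℝ) : ℂ)) volume a b := by
    apply h1.mono_fun
    · exact (Complex.measurable_ofReal.comp ((tpow_measurable k).comp
        (measurable_const.sub measurable_id))).aestronglyMeasurable
    · exact Filter.Eventually.of_forall fun t => by simp [Complex.norm_real]
  exact h2.mul_continuousOn (Continuous.continuousOn (by fun_prop))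

lemma tpow_integral_zero (k : ℕ) {s T : ℝ} (hs : s ≤ 0) (hT : 0 ≤ T) (c : ℂ) :
    (∫ t in (0:ℝ)..T, ((tpow k (s - t) : ℝ) : ℂ) * Complex.exp (c * t)) = 0 := by
  rw [intervalIntegral.integral_congr (g := fun _ => (0:ℂ))]
  · simp
  · intro t ht
    rw [Set.uIcc_of_le hT] at ht
    have : s - t ≤ 0 := by linarith [ht.1]
    simp [tpow_eq_zero k this]

lemma tpow_integral_eq (k : ℕ) {s T : ℝ} (hs : 0 ≤ s) (hsT : s ≤ T) (c : ℂ) :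
    (∫ t in (0:ℝ)..T, ((tpow k (s - t) : ℝ) : ℂ) * Complex.exp (c * t))
      = ∫ t in (0:ℝ)..s, ((s : ℂ) - t) ^ k * Complex.exp (c * t) := by
  have hi1 := tpow_intervalIntegrable k s 0 s c
  have hi2 := tpow_intervalIntegrable k s s T c
  rw [← intervalIntegral.integral_add_adjacent_intervals hi1 hi2]
  have e2 : (∫ t in s..T, ((tpow k (s - t) : ℝ) : ℂ) * Complex.exp (c * t)) = 0 := by
    rw [intervalIntegral.integral_congr (g := fun _ => (0:ℂ))]
    · simp
    · intro t ht
      rw [Set.uIcc_of_le hsT] at ht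
      have : s - t ≤ 0 := by linarith [ht.1]
      simp [tpow_eq_zero k this]
  have e1 : (∫ t in (0:ℝ)..s, ((tpow k (s - t) : ℝ) : ℂ) * Complex.exp (c * t))
      = ∫ t in (0:ℝ)..s, ((s : ℂ) - t) ^ k * Complex.exp (c * t) := by
    apply intervalIntegral.integral_congr_ae
    have h0 : ∀ᵐ x : ℝ ∂volume, x ≠ s := by
      rw [MeasureTheory.ae_iff]
      simpa using measure_singleton s
    filter_upwards [h0] with t ht hmem
    rw [Set.uIoc_of_le hs] at hmem
    have hlt : t < s := lt_of_le_of_ne hmem.2 ht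
    rw [tpow_eq_pow k (by linarith : 0 < s - t)]
    push_cast
    ring
  rw [e1, e2, add_zero]

/-- Taylor expansion of the plane wave with `ReLU^k` integral remainder:
for `‖x‖ ≤ T` and `ω̄ = ω/‖ω‖`,
`e^{iω·x} = ∑_{j=0}^k (iω·x)^j/j! + (i^{k+1}/k!)‖ω‖^{k+1}
  ∫₀^T [(ω̄·x-t)_+^k e^{i‖ω‖t} + (-1)^{k-1}(-ω̄·x-t)_+^k e^{-i‖ω‖t}] dt`. -/
theorem plane_wave_taylor_relu_remainder {d : ℕ} (k : ℕ)
    (ω : EuclideanSpace ℝ (Fin d)) (hω : ω ≠ 0)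
    (T : ℝ) (hT : 0 < T)
    (x : EuclideanSpace ℝ (Fin d)) (hx : ‖x‖ ≤ T) :
    Complex.exp (Complex.I * (⟪ω, x⟫ : ℝ))
      = (∑ j ∈ Finset.range (k + 1),
            (Complex.I * (⟪ω, x⟫ : ℝ)) ^ j / (j.factorial : ℂ))
        + (Complex.I ^ (k + 1) / (k.factorial : ℂ)) * (‖ω‖ : ℂ) ^ (k + 1)
            * ∫ t in (0:ℝ)..T,
                ((tpow k (⟪‖ω‖⁻¹ • ω, x⟫ - t) : ℝ) : ℂ)
                    * Complex.exp (Complex.I * ‖ω‖ * t)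
                  + (-1 : ℂ) ^ (k + 1)
                    * ((tpow k (-⟪‖ω‖⁻¹ • ω, x⟫ - t) : ℝ) : ℂ)
                    * Complex.exp (-(Complex.I * ‖ω‖ * t)) := by
  set r := ‖ω‖ with hrdef
  have hr : 0 < r := norm_pos_iff.mpr hω
  set s : ℝ := ⟪r⁻¹ • ω, x⟫ with hsdef
  have hsx : ⟪ω, x⟫ = r * s := by
    rw [hsdef, real_inner_smul_left]
    field_simp
  have habs : |s| ≤ T := by
    have h1 : |s| ≤ ‖r⁻¹ • ω‖ * ‖x‖ := abs_real_inner_le_norm _ _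
    have h2 : ‖r⁻¹ • ω‖ = 1 := by
      rw [norm_smul, Real.norm_eq_abs, abs_inv, abs_of_pos hr]
      field_simp
      exact hrdef.symm
    rw [h2, one_mul] at h1
    exact h1.trans hx
  -- split the RHS integral
  have hsplit :
      (∫ t in (0:ℝ)..T,
          ((tpow k (s - t) : ℝ) : ℂ) * Complex.exp (Complex.I * r * t)
            + (-1 : ℂ) ^ (k + 1) * ((tpow k (-s - t) : ℝ) : ℂ)
              * Complex.exp (-(Complex.I * r * t)))
        = (∫ t in (0:ℝ)..T, ((tpow k (s - t) : ℝ) : ℂ) * Complex.exp ((Complex.I * r) * t))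
          + (-1 : ℂ) ^ (k + 1)
            * ∫ t in (0:ℝ)..T, ((tpow k (-s - t) : ℝ) : ℂ)
                * Complex.exp ((-(Complex.I * r)) * t) := by
    rw [← intervalIntegral.integral_const_mul,
      ← intervalIntegral.integral_add (tpow_intervalIntegrable k s 0 T (Complex.I * r))
        ((tpow_intervalIntegrable k (-s) 0 T (-(Complex.I * r))).const_mul _)]
    apply intervalIntegral.integral_congr
    intro t _
    simp only [neg_mul, mul_assoc]
  -- scaling of the remainder integral
  have hscale :
      (∫ t in (0:ℝ)..(r*s), (((r*s : ℝ) : ℂ) - t) ^ k * Complex.exp (Complex.I * t))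
        = (r : ℂ) ^ (k+1)
          * ∫ t in (0:ℝ)..s, ((s : ℂ) - t) ^ k * Complex.exp ((Complex.I * r) * t) := by
    have h := intervalIntegral.integral_comp_mul_left
      (fun u : ℝ => (((r*s : ℝ) : ℂ) - u) ^ k * Complex.exp (Complex.I * u)) (ne_of_gt hr)
      (a := 0) (b := s)
    rw [mul_zero] at h
    have hpt : ∀ u : ℝ, (((r*s : ℝ) : ℂ) - ((r*u : ℝ) : ℂ)) ^ k
        * Complex.exp (Complex.I * ((r*u : ℝ) : ℂ))
        = (r : ℂ) ^ k * (((s : ℂ) - u) ^ k * Complex.exp ((Complex.I * r) * u)) := by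
      intro u
      push_cast
      rw [show Complex.I * ((r:ℂ) * u) = (Complex.I * r) * u by ring,
        show ((r:ℂ) * s - (r:ℂ) * u) = (r:ℂ) * ((s:ℂ) - u) by ring, mul_pow]
      ring
    simp only [hpt] at h
    rw [intervalIntegral.integral_const_mul] at h
    rw [← smul_inv_smul₀ (ne_of_gt hr)
      (∫ t in (0:ℝ)..(r*s), (((r*s : ℝ) : ℂ) - t) ^ k * Complex.exp (Complex.I * t)), ← h]
    rw [Complex.real_smul]
    push_cast
    ring
  -- negation identity
  have hneg : (∫ t in (0:ℝ)..s, ((s:ℂ) - t) ^ k * Complex.exp ((Complex.I * r) * t))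
      = (-1:ℂ) ^ (k+1)
        * ∫ t in (0:ℝ)..(-s), (((-s : ℝ):ℂ) - t) ^ k
            * Complex.exp ((-(Complex.I * r)) * t) := by
    have h := intervalIntegral.integral_comp_neg (a := 0) (b := -s)
      (fun u : ℝ => ((s:ℂ) - u) ^ k * Complex.exp ((Complex.I * r) * u))
    simp only [neg_neg, neg_zero] at h
    have hpt : ∀ u : ℝ, ((s:ℂ) - ((-u : ℝ) : ℂ)) ^ k
        * Complex.exp ((Complex.I * r) * ((-u : ℝ) : ℂ))
        = (-1:ℂ) ^ k * ((((-s : ℝ):ℂ) - u) ^ k * Complex.exp ((-(Complex.I * r)) * u)) := by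
      intro u
      push_cast
      rw [show (Complex.I * r) * (-(u:ℂ)) = (-(Complex.I * r)) * u by ring,
        show ((s:ℂ) - (-(u:ℂ))) = (-1) * ((-(s:ℂ)) - u) by ring, mul_pow]
      ring
    simp only [hpt] at h
    rw [intervalIntegral.integral_const_mul, intervalIntegral.integral_symm 0 s] at h
    linear_combination h
  rw [hsx, exp_taylor_I k (r*s), hscale, hsplit]
  rcases le_or_gt 0 s with hs | hs
  · rw [tpow_integral_zero k (neg_nonpos.mpr hs) hT.le (-(Complex.I * r)),
      tpow_integral_eq k hs ((le_abs_self s).trans habs) (Complex.I * r)]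
    ring
  · rw [tpow_integral_zero k hs.le hT.le (Complex.I * r),
      tpow_integral_eq k (neg_nonneg.mpr hs.le) ((neg_le_abs s).trans habs) (-(Complex.I * r)),
      hneg]
    ring
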